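/- Let g be a matrix-like operator on H with σ(g) = {λ1,…,λn} and generalized eigenspaces H_{λi} = ker(g−λi)^m spanning H. If A is self-adjoint with domain E, g is invertible, gE = E and g*Ag = A, then E = Σ_i (E ∩ H_{λi}) and ker A = Σ_i (ker A ∩ H_{λi}). -/

import Mathlib

open scoped LinearPMap ComplexInnerProductSpace

open Polynomial

section Aux

variable {K : Type*} [Field K] {M : Type*} [AddCommGroup M] [Module K M]

/-- A submodule invariant under `T` is invariant under any polynomial in `T`. -/
lemma aux_aeval_mem (T : M →ₗ[K] M) (W : Submodule K M) (hW : ∀ x ∈ W, T x ∈ W)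
    (q : K[X]) {x : M} (hx : x ∈ W) : aeval T q x ∈ W := by
  induction q using Polynomial.induction_on' with
  | add p q hp hq => simpa [map_add] using W.add_mem hp hq
  | monomial n a =>
      have hpow : ∀ n : ℕ, (T ^ n) x ∈ W := by
        intro n
        induction n with
        | zero => simpa using hx
        | succ n ih => rw [pow_succ']; exact hW _ ih
      simpa [aeval_monomial, Module.algebraMap_end_eq_smul_id, Module.End.mul_apply] using
        W.smul_mem a (hpow n)

lemma aux_split (T : M →ₗ[K] M) (W : Submodule K M) (hW : ∀ x ∈ W, T x ∈ W) (m : ℕ)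
    (s : Finset K) : ∀ {x : M}, x ∈ W →
    aeval T (∏ l ∈ s, (X - C l) ^ m) x = 0 →
    x ∈ ⨆ l ∈ s, (W ⊓ LinearMap.ker (aeval T ((X - C l) ^ m))) := by
  classical
  induction s using Finset.induction with
  | empty => intro x hx hker; simp only [Finset.prod_empty, map_one, Module.End.one_apply] at hker
              ; simp [hker]
  | @insert l s hls ih =>
      intro x hx hker
      set p : K[X] := (X - C l) ^ m with hp
      set r : K[X] := ∏ j ∈ s, (X - C j) ^ m with hr
      have hpr : aeval T (p * r) x = 0 := by
        rwa [Finset.prod_insert hls] at hker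
      have hcop : IsCoprime p r := by
        have h0 : ∀ j ∈ s, IsCoprime (X - C l : K[X]) ((X - C j) ^ m) :=
          fun j hj => (isCoprime_X_sub_C_of_isUnit_sub
            ((sub_ne_zero_of_ne (by rintro rfl; exact hls hj)).isUnit)).pow_right
        exact (IsCoprime.prod_right h0).pow_left
      obtain ⟨a, b, hab⟩ := hcop
      have hx' : x = aeval T (b * r) x + aeval T (a * p) x := by
        have := congrArg (fun q : K[X] => aeval T q x) hab
        simp only [map_add, map_one, LinearMap.add_apply, Module.End.one_apply] at this
        rw [add_comm] at this; exact this.symm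
      have hy : aeval T (b * r) x ∈ W ⊓ LinearMap.ker (aeval T p) := by
        refine ⟨aux_aeval_mem T W hW _ hx, ?_⟩
        have : aeval T p (aeval T (b * r) x) = aeval T b (aeval T (p * r) x) := by
          rw [← Module.End.mul_apply, ← Module.End.mul_apply, ← map_mul, ← map_mul]
          ring_nf
        exact LinearMap.mem_ker.mpr (by rw [this, hpr, map_zero])
      have hz : aeval T (a * p) x ∈ ⨆ j ∈ s, (W ⊓ LinearMap.ker (aeval T ((X - C j) ^ m))) := by
        have h2 : aeval T r (aeval T (a * p) x) = aeval T a (aeval T (p * r) x) := by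
          rw [← Module.End.mul_apply, ← Module.End.mul_apply, ← map_mul, ← map_mul]
          ring_nf
        exact ih (aux_aeval_mem T W hW _ hx) (by rw [h2, hpr, map_zero])
      rw [hx']
      refine Submodule.add_mem _ ?_ ?_
      · exact Submodule.mem_iSup_of_mem l (Submodule.mem_iSup_of_mem (s.mem_insert_self l) hy)
      · have hle : (⨆ j ∈ s, W ⊓ LinearMap.ker (aeval T ((X - C j) ^ m))) ≤
            ⨆ j ∈ insert l s, W ⊓ LinearMap.ker (aeval T ((X - C j) ^ m)) :=
          biSup_mono fun j hj => Finset.mem_insert_of_mem hj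
        exact hle hz

end Aux

/-- Let `g` be a bounded invertible matrix-like operator with
`σ(g) = {λ₁,…,λₙ}` and generalized eigenspaces `H_{λᵢ} = ker (g−λᵢ)^m` spanning `H`.  If `A`
is densely defined self-adjoint with domain `E`, `gE = E` and `g*Ag = A`, then
`E = Σᵢ (E ∩ H_{λᵢ})` and `ker A = Σᵢ (ker A ∩ H_{λᵢ})`. -/
theorem stmt7 {H : Type*} [NormedAddCommGroup H] [InnerProductSpace ℂ H] [CompleteSpace H]
    (A : H →ₗ.[ℂ] H) (hdense : Dense (A.domain : Set H)) (hsa : IsSelfAdjoint A)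
    (g : H ≃L[ℂ] H) (nn m : ℕ) (hm : 0 < m) (lam : Fin nn → ℂ)
    (hspec : spectrum ℂ ((g : H →L[ℂ] H)) = Set.range lam)
    (hspan : (⨆ i : Fin nn,
      LinearMap.ker ((((g : H →L[ℂ] H) - lam i • (1 : H →L[ℂ] H)) ^ m : H →L[ℂ] H) :
        H →ₗ[ℂ] H)) = ⊤)
    (hgE : Submodule.map (((g : H →L[ℂ] H)) : H →ₗ[ℂ] H) A.domain = A.domain)
    (hinv : ∀ (x y : H) (hx : x ∈ A.domain) (hy : y ∈ A.domain)
      (hgx : g x ∈ A.domain) (hgy : g y ∈ A.domain),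
      ⟪(A ⟨g x, hgx⟩ : H), g y⟫ = ⟪(A ⟨x, hx⟩ : H), y⟫) :
    A.domain = (⨆ i : Fin nn, A.domain ⊓
        LinearMap.ker ((((g : H →L[ℂ] H) - lam i • (1 : H →L[ℂ] H)) ^ m : H →L[ℂ] H) :
          H →ₗ[ℂ] H)) ∧
      Submodule.map A.domain.subtype (LinearMap.ker A.toFun) =
        ⨆ i : Fin nn, (Submodule.map A.domain.subtype (LinearMap.ker A.toFun) ⊓
          LinearMap.ker ((((g : H →L[ℂ] H) - lam i • (1 : H →L[ℂ] H)) ^ m : H →L[ℂ] H) :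
            H →ₗ[ℂ] H)) := by
  classical
  set gl : H →ₗ[ℂ] H := ((g : H →L[ℂ] H) : H →ₗ[ℂ] H) with hgl
  -- pointwise identification of the CLM power with the polynomial evaluation
  have hpow : ∀ (c : ℂ) (n : ℕ) (x : H),
      (((g : H →L[ℂ] H) - c • (1 : H →L[ℂ] H)) ^ n) x = ((gl - c • 1) ^ n) x := by
    intro c n
    induction n with
    | zero => intro x; simp
    | succ n ih =>
        intro x
        rw [pow_succ, pow_succ, ContinuousLinearMap.mul_apply, Module.End.mul_apply]
        exact ih _
  have haev : ∀ c : ℂ, aeval gl ((X - C c) ^ m) = (gl - c • 1) ^ m := by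
    intro c
    rw [map_pow, map_sub, aeval_X, aeval_C, Module.algebraMap_end_eq_smul_id]
    rfl
  have hK : ∀ c : ℂ,
      LinearMap.ker ((((g : H →L[ℂ] H) - c • (1 : H →L[ℂ] H)) ^ m : H →L[ℂ] H) : H →ₗ[ℂ] H) =
        LinearMap.ker (aeval gl ((X - C c) ^ m)) := by
    intro c
    ext x
    rw [LinearMap.mem_ker, LinearMap.mem_ker, haev, ContinuousLinearMap.coe_coe, hpow]
  set s : Finset ℂ := Finset.image lam Finset.univ with hs
  -- the big product annihilates everything
  have hann : ∀ x : H, aeval gl (∏ l ∈ s, (X - C l) ^ m) x = 0 := by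
    intro x
    have hspan' : (⨆ i : Fin nn, LinearMap.ker (aeval gl ((X - C (lam i)) ^ m))) = ⊤ := by
      rw [← hspan]; exact (iSup_congr fun i => (hK (lam i)).symm)
    have hle : (⨆ i : Fin nn, LinearMap.ker (aeval gl ((X - C (lam i)) ^ m))) ≤
        LinearMap.ker (aeval gl (∏ l ∈ s, (X - C l) ^ m)) := by
      refine iSup_le fun i y hy => ?_
      have hmem : lam i ∈ s := Finset.mem_image_of_mem lam (Finset.mem_univ i)
      have hfac : ∏ l ∈ s, (X - C l) ^ m =
          (∏ l ∈ s.erase (lam i), (X - C l) ^ m) * (X - C (lam i)) ^ m :=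
        (Finset.prod_erase_mul s _ hmem).symm
      rw [LinearMap.mem_ker, hfac, map_mul, Module.End.mul_apply,
        LinearMap.mem_ker.mp hy, map_zero]
    have hx : x ∈ (⨆ i : Fin nn, LinearMap.ker (aeval gl ((X - C (lam i)) ^ m))) := by
      rw [hspan']; exact Submodule.mem_top
    exact hle hx
  -- the key decomposition for invariant subspaces
  have key : ∀ W : Submodule ℂ H, (∀ x ∈ W, gl x ∈ W) →
      W = ⨆ i : Fin nn, (W ⊓
        LinearMap.ker ((((g : H →L[ℂ] H) - lam i • (1 : H →L[ℂ] H)) ^ m : H →L[ℂ] H) : H →ₗ[ℂ] H)) := by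
    intro W hWinv
    apply le_antisymm
    · intro x hx
      have h1 := aux_split gl W hWinv m s hx (hann x)
      have h2 : (⨆ l ∈ s, (W ⊓ LinearMap.ker (aeval gl ((X - C l) ^ m)))) ≤
          ⨆ i : Fin nn, (W ⊓
            LinearMap.ker ((((g : H →L[ℂ] H) - lam i • (1 : H →L[ℂ] H)) ^ m : H →L[ℂ] H) : H →ₗ[ℂ] H)) := by
        refine iSup₂_le fun l hl => ?_
        obtain ⟨i, -, rfl⟩ := Finset.mem_image.mp hl
        rw [← hK (lam i)]
        exact le_iSup (fun i => W ⊓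
          LinearMap.ker ((((g : H →L[ℂ] H) - lam i • (1 : H →L[ℂ] H)) ^ m : H →L[ℂ] H) : H →ₗ[ℂ] H)) i
      exact h2 h1
    · exact iSup_le fun i => inf_le_left
  -- invariance of the domain
  have hEinv : ∀ x ∈ A.domain, gl x ∈ A.domain := by
    intro x hx
    exact (Submodule.ext_iff.mp hgE _).mp (Submodule.mem_map_of_mem hx)
  -- orthogonal complement of the dense domain is trivial
  have hbot : A.domainᗮ = ⊥ :=
    Submodule.topologicalClosure_eq_top_iff.mp
      (by rwa [Submodule.dense_iff_topologicalClosure_eq_top] at hdense)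
  -- invariance of the kernel
  have hKerinv : ∀ x ∈ Submodule.map A.domain.subtype (LinearMap.ker A.toFun),
      gl x ∈ Submodule.map A.domain.subtype (LinearMap.ker A.toFun) := by
    rintro x ⟨y, hyker, rfl⟩
    have hgy : g (y : H) ∈ A.domain :=
      (Submodule.ext_iff.mp hgE _).mp (Submodule.mem_map_of_mem y.2)
    have hA0 : (A ⟨g (y : H), hgy⟩ : H) = 0 := by
      have horth : ∀ z ∈ A.domain, ⟪(A ⟨g (y : H), hgy⟩ : H), z⟫ = 0 := by
        intro z hz
        obtain ⟨w, hw, rfl⟩ := Submodule.mem_map.mp ((Submodule.ext_iff.mp hgE _).mpr hz)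
        have hgw : g w ∈ A.domain :=
          (Submodule.ext_iff.mp hgE _).mp (Submodule.mem_map_of_mem hw)
        have := hinv (y : H) w y.2 hw hgy hgw
        rw [show (gl w : H) = g w from rfl]
        rw [this]
        have hy0 : (A ⟨(y : H), y.2⟩ : H) = 0 := hyker
        rw [hy0, inner_zero_left]
      have hmem : (A ⟨g (y : H), hgy⟩ : H) ∈ A.domainᗮ := by
        rw [Submodule.mem_orthogonal]
        intro u hu
        rw [← inner_eq_zero_symm]
        exact horth u hu
      rw [hbot] at hmem
      exact hmem
    exact ⟨⟨g (y : H), hgy⟩, hA0, rfl⟩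
  exact ⟨key A.domain hEinv, key _ hKerinv⟩
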